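/- arXiv:2109.02107 — 4 statements merged into one kernel-verified Lean document; each statement's English description precedes it below -/
import Mathlib

section
/- Define the linear map L sending a pair (f, g), where f is a formal power series in x and g a formal power series in (x,y), to the formal power series L(f,g)(x,y,p) = g_{xx} + (2 g_{xy} − f_{xx}) p + g_{yy} p² in (x,y,p). If (f,g) ∈ ker L and f has vanishing coefficients in degrees 0 and 1 while g has vanishing coefficients for the monomials 1, x, y, xy, then f = 0 and g = 0. (Injectivity of L on the subspace F'.) -/
/-- injectivity of the homological operator
`L(f,g) = g_{xx} + (2 g_{xy} - f_{xx}) p + g_{yy} p²` on the subspace `F'`.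
Power series are encoded by their coefficient functions: `f n` is the coefficient
of `x^n` in `f`, and `g i j` is the coefficient of `x^i y^j` in `g`.  The three
kernel hypotheses say that the coefficient of `x^i y^j p^k` in `L(f,g)` vanishes
for `k = 0, 1, 2` respectively (it vanishes trivially for `k ≥ 3`). -/
theorem statement3 (f : ℕ → ℝ) (g : ℕ → ℕ → ℝ)
    (hf0 : f 0 = 0) (hf1 : f 1 = 0)
    (hg00 : g 0 0 = 0) (hg10 : g 1 0 = 0) (hg01 : g 0 1 = 0) (hg11 : g 1 1 = 0)
    (hker0 : ∀ i j : ℕ, ((i : ℝ) + 1) * ((i : ℝ) + 2) * g (i + 2) j = 0)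
    (hker1 : ∀ i j : ℕ,
      2 * ((i : ℝ) + 1) * ((j : ℝ) + 1) * g (i + 1) (j + 1)
        - (if j = 0 then ((i : ℝ) + 1) * ((i : ℝ) + 2) * f (i + 2) else 0) = 0)
    (hker2 : ∀ i j : ℕ, ((j : ℝ) + 1) * ((j : ℝ) + 2) * g i (j + 2) = 0) :
    (∀ n, f n = 0) ∧ (∀ i j, g i j = 0) := by
  have pos : ∀ i : ℕ, (0:ℝ) < ((i:ℝ)+1)*((i:ℝ)+2) := by
    intro i; positivity
  have hg : ∀ i j, g i j = 0 := by
    intro i j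
    match i, j with
    | 0, 0 => exact hg00
    | 1, 0 => exact hg10
    | 0, 1 => exact hg01
    | 1, 1 => exact hg11
    | i+2, j =>
      have := hker0 i j
      have := (pos i).ne'
      exact (mul_eq_zero.mp (hker0 i j)).resolve_left this
    | 0, j+2 =>
      nlinarith [hker2 0 j, pos j]
    | 1, j+2 =>
      nlinarith [hker2 1 j, pos j]
  constructor
  · intro n
    match n with
    | 0 => exact hf0
    | 1 => exact hf1
    | n+2 =>
      have h := hker1 n 0
      norm_num at h
      rw [hg (n+1) 1] at h; norm_num at h
      have hn : (0:ℝ) ≤ (n:ℝ) := Nat.cast_nonneg n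
      rcases h with (h|h)|h
      · linarith
      · linarith
      · exact h
  · exact hg
end

section
/- Let M, N ∈ ℝ[[x,y]] be formal power series with M(0,y) = 0, N(x,0) = 0, N(0,y) = 0, satisfying 2 M_x = N_y and N_{xy} = N_y N. Then M = 0 and N = 0. -/
/-- Formal derivative `d/dy` on `ℝ[[y]]`. -/
noncomputable def dy (F : PowerSeries ℝ) : PowerSeries ℝ :=
  PowerSeries.mk fun n => ((n : ℝ) + 1) * PowerSeries.coeff (R := ℝ) (n + 1) F

/-- `ℝ[[x,y]]` viewed as `(ℝ[[y]])[[x]]`: partial derivative `∂/∂y`. -/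
noncomputable def Dy (N : PowerSeries (PowerSeries ℝ)) : PowerSeries (PowerSeries ℝ) :=
  PowerSeries.mk fun k => dy (PowerSeries.coeff (R := PowerSeries ℝ) k N)

/-- `ℝ[[x,y]]` viewed as `(ℝ[[y]])[[x]]`: partial derivative `∂/∂x`. -/
noncomputable def Dx (N : PowerSeries (PowerSeries ℝ)) : PowerSeries (PowerSeries ℝ) :=
  PowerSeries.mk fun k =>
    ((k + 1 : ℕ) : PowerSeries ℝ) * PowerSeries.coeff (R := PowerSeries ℝ) (k + 1) N

/-- if `M, N ∈ ℝ[[x,y]]` satisfy `M(0,y) = 0`, `N(x,0) = 0`,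
`N(0,y) = 0`, `2 M_x = N_y` and `N_{xy} = N_y N`, then `M = 0` and `N = 0`. -/
theorem statement7 (M N : PowerSeries (PowerSeries ℝ))
    (hM0 : PowerSeries.coeff (R := PowerSeries ℝ) 0 M = 0)
    (hNx0 : ∀ k : ℕ,
      PowerSeries.constantCoeff (R := ℝ) (PowerSeries.coeff (R := PowerSeries ℝ) k N) = 0)
    (hN0 : PowerSeries.coeff (R := PowerSeries ℝ) 0 N = 0)
    (heq1 : 2 * Dx M = Dy N)
    (heq2 : Dx (Dy N) = Dy N * N) :
    M = 0 ∧ N = 0 := by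
  have hcast : ∀ k : ℕ, ((k + 1 : ℕ) : PowerSeries ℝ) ≠ 0 := by
    intro k h
    have h2 : ((k : ℝ) + 1) = 0 := by
      simpa using congrArg (PowerSeries.constantCoeff (R := ℝ)) h
    exact (by positivity : ((k : ℝ) + 1) ≠ 0) h2
  -- N = 0
  have hNk : ∀ k : ℕ, PowerSeries.coeff (R := PowerSeries ℝ) k N = 0 := by
    intro k
    induction k using Nat.strong_induction_on with
    | _ k ih =>
      match k with
      | 0 => exact hN0
      | (k + 1) =>
        have h2 := congrArg (PowerSeries.coeff (R := PowerSeries ℝ) k) heq2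
        rw [PowerSeries.coeff_mul] at h2
        have hrhs : ∑ p ∈ Finset.HasAntidiagonal.antidiagonal k,
            PowerSeries.coeff (R := PowerSeries ℝ) p.1 (Dy N) *
              PowerSeries.coeff (R := PowerSeries ℝ) p.2 N = 0 := by
          apply Finset.sum_eq_zero
          intro p hp
          have hj : p.2 ≤ k := by
            have := Finset.HasAntidiagonal.antidiagonal.snd_le hp
            omega
          rw [ih p.2 (by omega), mul_zero]
        rw [hrhs] at h2
        simp only [Dx, Dy, PowerSeries.coeff_mk] at h2
        have hdy : dy (PowerSeries.coeff (R := PowerSeries ℝ) (k + 1) N) = 0 := by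
          rcases mul_eq_zero.mp h2 with h | h
          · exact absurd h (hcast k)
          · exact h
        apply PowerSeries.ext
        intro n
        match n with
        | 0 => simpa using hNx0 (k + 1)
        | (n + 1) =>
          have := congrArg (PowerSeries.coeff (R := ℝ) n) hdy
          simp only [dy, PowerSeries.coeff_mk, map_zero] at this
          have hne : ((n : ℝ) + 1) ≠ 0 := by positivity
          have := mul_eq_zero.mp this
          simpa [hne] using this
  have hN : N = 0 := PowerSeries.ext fun k => by simpa using hNk k
  refine ⟨?_, hN⟩
  -- Dy N = 0
  have hDyN : Dy N = 0 := by
    ext k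
    simp [Dy, hN, dy]
  rw [hDyN] at heq1
  -- M = 0
  apply PowerSeries.ext
  intro k
  match k with
  | 0 => simpa using hM0
  | (k + 1) =>
    have h1 := congrArg (PowerSeries.coeff (R := PowerSeries ℝ) k) heq1
    simp only [Dx, map_zero, PowerSeries.coeff_mk] at h1
    have h1' : (2 : PowerSeries (PowerSeries ℝ)) *
        PowerSeries.mk (fun k =>
          ((k + 1 : ℕ) : PowerSeries ℝ) * PowerSeries.coeff (R := PowerSeries ℝ) (k + 1) M) =
        0 := heq1
    have h2 : ((k + 1 : ℕ) : PowerSeries ℝ) *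
        PowerSeries.coeff (R := PowerSeries ℝ) (k + 1) M = 0 := by
      have := congrArg (PowerSeries.coeff (R := PowerSeries ℝ) k) h1'
      rw [PowerSeries.coeff_mul] at this
      simp only [map_zero] at this
      have h2' : (2 : PowerSeries ℝ) *
          (((k + 1 : ℕ) : PowerSeries ℝ) *
            PowerSeries.coeff (R := PowerSeries ℝ) (k + 1) M) = 0 := by
        rw [← this]
        rw [show (2 : PowerSeries (PowerSeries ℝ)) = PowerSeries.C (R := PowerSeries ℝ) 2 by
          simp [← map_ofNat (PowerSeries.C (R := PowerSeries ℝ)) 2]]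
        rw [Finset.sum_eq_single (0, k)]
        · simp [PowerSeries.coeff_C, PowerSeries.coeff_mk]
        · intro p hp hne
          have : p.1 ≠ 0 := by
            intro h
            apply hne
            have := Finset.HasAntidiagonal.mem_antidiagonal.mp hp
            ext <;> omega
          simp [PowerSeries.coeff_C, this]
        · intro h; simp at h
      rcases mul_eq_zero.mp h2' with h | h
      · exfalso
        have h3 := congrArg (PowerSeries.constantCoeff (R := ℝ)) h
        rw [map_ofNat, map_zero] at h3
        norm_num at h3
      · exact h
    rcases mul_eq_zero.mp h2 with h | h
    · exact absurd h (hcast k)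
    · simpa using h
end

section
/- Consider the formal homological equation: given J ∈ ℝ[[x,y,p]] written as J = Σ_{i,j} J_{i,j}(y) x^i p^j, there exists a unique pair (f, g) with f(x) = Σ_{j≥2} f_j x^j ∈ ℝ[[x]] and g(x,y) = Σ_{j≥0} g_j(y) x^j ∈ ℝ[[x,y]] satisfying g_0(0) = g_0'(0) = 0, g_1(0) = g_1'(0) = 0, such that K := J + g_{xx} + (2g_{xy} − f_{xx})p + g_{yy}p² satisfies: K_{i,0}(y) = 0 for all i ≥ 0; K_{0,1}(y) = 0; K_{i,1}(0) = 0 for all i ≥ 1; and K_{0,2}(y) = 0. -/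
lemma coeff_dy (F : PowerSeries ℝ) (n : ℕ) :
    PowerSeries.coeff (R := ℝ) n (dy F) = ((n : ℝ) + 1) * PowerSeries.coeff (R := ℝ) (n + 1) F := by
  simp [dy]

lemma constCoeff_dy (F : PowerSeries ℝ) :
    PowerSeries.constantCoeff (R := ℝ) (dy F) = PowerSeries.coeff (R := ℝ) 1 F := by
  rw [← PowerSeries.coeff_zero_eq_constantCoeff_apply, coeff_dy]
  norm_num

lemma constCoeff_smul (a : ℝ) (F : PowerSeries ℝ) :
    PowerSeries.constantCoeff (R := ℝ) (a • F) = a * PowerSeries.constantCoeff (R := ℝ) F := rfl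

/-- The solution `g`. -/
noncomputable def gsol (J : ℕ → ℕ → PowerSeries ℝ) : ℕ → PowerSeries ℝ
  | 0 => PowerSeries.mk fun n =>
      match n with
      | 0 => 0
      | 1 => 0
      | (m+2) => -(PowerSeries.coeff (R := ℝ) m (J 0 2)) / (((m : ℝ) + 1) * ((m : ℝ) + 2))
  | 1 => PowerSeries.mk fun n =>
      match n with
      | 0 => 0
      | 1 => 0
      | (m+2) => -(PowerSeries.coeff (R := ℝ) (m+1) (J 0 1)) / (2 * ((m : ℝ) + 2))
  | (i+2) => (-(1 / (((i : ℝ) + 1) * ((i : ℝ) + 2)))) • J i 0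

/-- The solution `f`. -/
noncomputable def fsol (J : ℕ → ℕ → PowerSeries ℝ) : ℕ → ℝ
  | 0 => 0
  | 1 => 0
  | 2 => PowerSeries.coeff (R := ℝ) 0 (J 0 1) / 4
  | (m+3) => (PowerSeries.coeff (R := ℝ) 0 (J (m+1) 1)
      + 2 * ((m : ℝ) + 2) * PowerSeries.coeff (R := ℝ) 1 (gsol J (m+2)))
      / (2 * ((m : ℝ) + 2) * ((m : ℝ) + 3))

/-- the formal homological equation.  A series
`J = Σ J_{i,j}(y) x^i p^j ∈ ℝ[[x,y,p]]` is encoded by the family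
`J : ℕ → ℕ → ℝ[[y]]`, a pair `(f,g)` with `f = Σ_{j≥2} f_j x^j` and
`g = Σ g_j(y) x^j` by `fg : (ℕ → ℝ) × (ℕ → ℝ[[y]])` with `f 0 = f 1 = 0`.
The transformed series `K := J + g_{xx} + (2 g_{xy} - f_{xx}) p + g_{yy} p²`
has `K_{i,0} = J_{i,0} + (i+1)(i+2) g_{i+2}`,
`K_{i,1} = J_{i,1} + 2(i+1) g'_{i+1} - 2(i+1)(i+2) f_{i+2}`,
`K_{i,2} = J_{i,2} + g''_i`.  There is a unique `(f,g)` with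
`g_0(0) = g_0'(0) = 0`, `g_1(0) = g_1'(0) = 0` making `K_{i,0} = 0` for all `i`,
`K_{0,1} = 0`, `K_{i,1}(0) = 0` for all `i ≥ 1`, and `K_{0,2} = 0`. -/
theorem statement8 (J : ℕ → ℕ → PowerSeries ℝ) :
    ∃! fg : (ℕ → ℝ) × (ℕ → PowerSeries ℝ),
      (fg.1 0 = 0 ∧ fg.1 1 = 0 ∧
        PowerSeries.constantCoeff (R := ℝ) (fg.2 0) = 0 ∧
        PowerSeries.constantCoeff (R := ℝ) (dy (fg.2 0)) = 0 ∧
        PowerSeries.constantCoeff (R := ℝ) (fg.2 1) = 0 ∧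
        PowerSeries.constantCoeff (R := ℝ) (dy (fg.2 1)) = 0) ∧
      (∀ i : ℕ,
        J i 0 + (((i : ℝ) + 1) * ((i : ℝ) + 2)) • fg.2 (i + 2) = 0) ∧
      (J 0 1 + (2 : ℝ) • dy (fg.2 1) - PowerSeries.C (R := ℝ) (4 * fg.1 2) = 0) ∧
      (∀ i : ℕ, 1 ≤ i →
        PowerSeries.constantCoeff (R := ℝ)
          (J i 1 + (2 * ((i : ℝ) + 1)) • dy (fg.2 (i + 1))
            - PowerSeries.C (R := ℝ) (2 * ((i : ℝ) + 1) * ((i : ℝ) + 2) * fg.1 (i + 2)))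
          = 0) ∧
      (J 0 2 + dy (dy (fg.2 0)) = 0) := by
  refine ⟨(fsol J, gsol J), ⟨⟨rfl, rfl, ?_, ?_, ?_, ?_⟩, ?_, ?_, ?_, ?_⟩, ?_⟩
  · rw [← PowerSeries.coeff_zero_eq_constantCoeff_apply]
    simp [gsol]
  · rw [constCoeff_dy]
    simp [gsol]
  · rw [← PowerSeries.coeff_zero_eq_constantCoeff_apply]
    simp [gsol]
  · rw [constCoeff_dy]
    simp [gsol]
  · -- K_{i,0} = 0
    intro i
    show J i 0 + (((i : ℝ) + 1) * ((i : ℝ) + 2)) •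
      ((-(1 / (((i : ℝ) + 1) * ((i : ℝ) + 2)))) • J i 0) = 0
    have hc : (((i : ℝ) + 1) * ((i : ℝ) + 2)) ≠ 0 := by positivity
    rw [smul_smul]
    have : (((i : ℝ) + 1) * ((i : ℝ) + 2)) * (-(1 / (((i : ℝ) + 1) * ((i : ℝ) + 2)))) = -1 := by
      field_simp
    rw [this, neg_one_smul, add_neg_cancel]
  · -- K_{0,1} = 0
    ext n
    simp only [map_add, map_sub, map_smul, coeff_dy, PowerSeries.coeff_C, map_zero,
      smul_eq_mul]
    match n with
    | 0 =>
      simp [gsol, fsol]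
      ring
    | (m+1) =>
      have hc : (2 : ℝ) * ((m : ℝ) + 2) ≠ 0 := by positivity
      simp only [gsol, fsol, PowerSeries.coeff_mk]
      push_cast
      field_simp
      ring
  · -- K_{i,1}(0) = 0 for i ≥ 1
    intro i hi
    obtain ⟨m, rfl⟩ : ∃ m, i = m + 1 := ⟨i - 1, by omega⟩
    simp only [map_add, map_sub, constCoeff_smul, constCoeff_dy,
      PowerSeries.constantCoeff_C]
    rw [show m + 1 + 1 = m + 2 from rfl, show m + 1 + 2 = m + 3 from rfl]
    have hc : (2 : ℝ) * ((m : ℝ) + 2) * ((m : ℝ) + 3) ≠ 0 := by positivity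
    rw [show fsol J (m + 3) = (PowerSeries.coeff (R := ℝ) 0 (J (m+1) 1)
      + 2 * ((m : ℝ) + 2) * PowerSeries.coeff (R := ℝ) 1 (gsol J (m+2)))
      / (2 * ((m : ℝ) + 2) * ((m : ℝ) + 3)) from rfl,
      ← PowerSeries.coeff_zero_eq_constantCoeff_apply]
    push_cast
    field_simp
    ring
  · -- K_{0,2} = 0
    ext n
    simp only [map_add, coeff_dy, map_zero]
    have hc : (((n : ℝ) + 1) * ((n : ℝ) + 2)) ≠ 0 := by positivity
    rw [show n + 1 + 1 = n + 2 from rfl]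
    simp only [gsol, PowerSeries.coeff_mk]
    push_cast
    field_simp
    ring
  · -- uniqueness
    rintro ⟨f', g'⟩ ⟨⟨hf0, hf1, hg00, hg01, hg10, hg11⟩, h2, h3, h4, h5⟩
    simp only at hf0 hf1 hg00 hg01 hg10 hg11 h2 h3 h4 h5
    rw [constCoeff_dy] at hg01 hg11
    rw [← PowerSeries.coeff_zero_eq_constantCoeff_apply] at hg00 hg10
    have hg : g' = gsol J := by
      funext j
      match j with
      | 0 =>
        ext n
        match n with
        | 0 =>
          rw [hg00]; simp [gsol]
        | 1 =>
          rw [hg01]; simp [gsol]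
        | (m+2) =>
          have h := congrArg (PowerSeries.coeff (R := ℝ) m) h5
          simp only [map_add, coeff_dy, map_zero] at h
          rw [show m + 1 + 1 = m + 2 from rfl] at h
          have hc : (((m : ℝ) + 1) * ((m : ℝ) + 2)) ≠ 0 := by positivity
          simp only [gsol, PowerSeries.coeff_mk]
          push_cast at h ⊢
          field_simp
          linear_combination h
      | 1 =>
        ext n
        match n with
        | 0 =>
          rw [hg10]; simp [gsol]
        | 1 =>
          rw [hg11]; simp [gsol]
        | (m+2) =>
          have h := congrArg (PowerSeries.coeff (R := ℝ) (m+1)) h3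
          simp only [map_add, map_sub, map_smul, coeff_dy, PowerSeries.coeff_C,
            map_zero, smul_eq_mul] at h
          rw [show m + 1 + 1 = m + 2 from rfl] at h
          have hc : ((m : ℝ) + 2) ≠ 0 := by positivity
          simp only [gsol, PowerSeries.coeff_mk]
          push_cast at h ⊢
          field_simp
          linear_combination h
      | (i+2) =>
        have h := h2 i
        have hc : (((i : ℝ) + 1) * ((i : ℝ) + 2)) ≠ 0 := by positivity
        have h' : (((i : ℝ) + 1) * ((i : ℝ) + 2)) • g' (i+2) = -J i 0 :=
          eq_neg_of_add_eq_zero_right h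
        show g' (i+2) = (-(1 / (((i : ℝ) + 1) * ((i : ℝ) + 2)))) • J i 0
        calc g' (i+2) = (1 / (((i : ℝ) + 1) * ((i : ℝ) + 2))) •
              ((((i : ℝ) + 1) * ((i : ℝ) + 2)) • g' (i+2)) := by
              rw [smul_smul, one_div, inv_mul_cancel₀ hc, one_smul]
          _ = (1 / (((i : ℝ) + 1) * ((i : ℝ) + 2))) • (-J i 0) := by rw [h']
          _ = (-(1 / (((i : ℝ) + 1) * ((i : ℝ) + 2)))) • J i 0 := by
              rw [smul_neg, neg_smul]
    have hf : f' = fsol J := by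
      funext j
      match j with
      | 0 => exact hf0
      | 1 => exact hf1
      | 2 =>
        have h := congrArg (PowerSeries.coeff (R := ℝ) 0) h3
        simp only [map_add, map_sub, map_smul, coeff_dy, PowerSeries.coeff_C,
          map_zero, smul_eq_mul] at h
        rw [show (0:ℕ) + 1 = 1 from rfl, hg11] at h
        show f' 2 = PowerSeries.coeff (R := ℝ) 0 (J 0 1) / 4
        simp only [PowerSeries.coeff_zero_eq_constantCoeff_apply] at h ⊢
        push_cast at h
        norm_num at h
        linarith
      | (m+3) =>
        have h := h4 (m+1) (by omega)
        rw [hg] at h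
        simp only [map_add, map_sub, constCoeff_smul, constCoeff_dy,
          PowerSeries.constantCoeff_C] at h
        rw [show m + 1 + 1 = m + 2 from rfl, show m + 1 + 2 = m + 3 from rfl] at h
        have hc : (2 : ℝ) * ((m : ℝ) + 2) * ((m : ℝ) + 3) ≠ 0 := by positivity
        show f' (m+3) = (PowerSeries.coeff (R := ℝ) 0 (J (m+1) 1)
          + 2 * ((m : ℝ) + 2) * PowerSeries.coeff (R := ℝ) 1 (gsol J (m+2)))
          / (2 * ((m : ℝ) + 2) * ((m : ℝ) + 3))
        simp only [PowerSeries.coeff_zero_eq_constantCoeff_apply] at h ⊢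
        rw [eq_div_iff hc]
        push_cast at h
        linear_combination -h
    rw [Prod.ext_iff]
    exact ⟨hf, hg⟩
end

section
/- Let s be a real-analytic function and f₂ a constant. Let (γ₁, γ₂) solve γ₁' = f₂γ₁², γ₂' = s(γ₂)γ₁ with γ₁(0) = x, γ₂(0) = y. Then γ₁(t) = x/(1 − f₂ x t), and for every k ≥ 1 there exists a real-analytic function H_k(λ,μ) such that (d^k/dt^k) γ₂'(t) = H_k(γ₁(t), γ₂(t)) · γ₁(t)^{k+1}; in particular γ₂^{(k+1)}(0) = H_k(x,y) x^{k+1} = O(x^{k+1}). -/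
open Set

/-- Linear Grönwall: a function `F` with `F' = c·F`, `F 0 = 0` and `c` continuous
vanishes on `[0, ∞)`. -/
lemma zero_of_linear_ode (F c : ℝ → ℝ) (hc : Continuous c) (h0 : F 0 = 0)
    (hF : ∀ t : ℝ, HasDerivAt F (c t * F t) t) : ∀ t : ℝ, 0 ≤ t → F t = 0 := by
  intro b hb
  obtain ⟨K, hK⟩ := (isCompact_Icc (a := (0:ℝ)) (b := b)).exists_bound_of_continuousOn
    hc.continuousOn
  have hcont : ContinuousOn F (Icc 0 b) :=
    fun t _ => ((hF t).continuousAt).continuousWithinAt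
  have key := norm_le_gronwallBound_of_norm_deriv_right_le (f := F)
    (f' := fun t => c t * F t) (δ := 0) (K := K) (ε := 0) (a := 0) (b := b)
    hcont (fun t _ => (hF t).hasDerivWithinAt) (by simp [h0])
    (fun t ht => by
      have h1 : ‖c t‖ ≤ K := hK t (Ico_subset_Icc_self ht)
      rw [norm_mul, add_zero]
      exact mul_le_mul_of_nonneg_right h1 (norm_nonneg _))
  have := key b ⟨hb, le_refl b⟩
  rw [gronwallBound_ε0_δ0] at this
  exact norm_le_zero_iff.mp this

/-- Linear Grönwall on all of `ℝ`. -/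
lemma zero_of_linear_ode' (F c : ℝ → ℝ) (hc : Continuous c) (h0 : F 0 = 0)
    (hF : ∀ t : ℝ, HasDerivAt F (c t * F t) t) : ∀ t : ℝ, F t = 0 := by
  intro t
  rcases le_or_gt 0 t with h | h
  · exact zero_of_linear_ode F c hc h0 hF t h
  · have hG : ∀ u : ℝ, HasDerivAt (fun u => F (-u)) ((-c (-u)) * F (-u)) u := by
      intro u
      have := (hF (-u)).scomp u (hasDerivAt_neg u)
      simpa [mul_comm, Function.comp_def] using this
    have := zero_of_linear_ode (fun u => F (-u)) (fun u => -c (-u))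
      (by fun_prop) (by simpa using h0) hG (-t) (by linarith)
    simpa using this

/-- First part: explicit formula for `γ₁`. -/
lemma part1_statement16 (f₂ x : ℝ) (γ₁ : ℝ → ℝ) (h10 : γ₁ 0 = x)
    (hode1 : ∀ t : ℝ, HasDerivAt γ₁ (f₂ * γ₁ t ^ 2) t) :
    ∀ t : ℝ, γ₁ t = x / (1 - f₂ * x * t) := by
  set F : ℝ → ℝ := fun t => x - (1 - f₂ * x * t) * γ₁ t with hFdef
  have hF : ∀ t : ℝ, HasDerivAt F ((f₂ * γ₁ t) * F t) t := by
    intro t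
    have h1 : HasDerivAt (fun t : ℝ => 1 - f₂ * x * t) (-(f₂ * x)) t := by
      simpa using ((hasDerivAt_id t).const_mul (f₂ * x)).const_sub 1
    have h2 := (h1.fun_mul (hode1 t)).const_sub x
    refine h2.congr_deriv ?_
    show _ = f₂ * γ₁ t * (x - (1 - f₂ * x * t) * γ₁ t)
    ring
  have hcont : Continuous fun t => f₂ * γ₁ t :=
    continuous_const.mul (continuous_iff_continuousAt.mpr fun t => (hode1 t).continuousAt)
  have hF0 : F 0 = 0 := by simp [hFdef, h10]
  have hFzero : ∀ t, F t = 0 := zero_of_linear_ode' F _ hcont hF0 hF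
  have hkey : ∀ t : ℝ, (1 - f₂ * x * t) * γ₁ t = x := by
    intro t
    have := hFzero t
    simp only [hFdef] at this
    linarith
  have hfx : f₂ * x = 0 := by
    by_contra h
    have := hkey (f₂ * x)⁻¹
    rw [mul_inv_cancel₀ h] at this
    simp only [sub_self, zero_mul] at this
    exact h (by rw [← this, mul_zero])
  intro t
  have := hkey t
  rw [hfx] at this ⊢
  simpa using this

/-- Second part: the real-analytic functions `H_k`. -/
lemma part2_statement16 (s : ℝ → ℝ) (hs : ∀ z : ℝ, AnalyticAt ℝ s z)
    (f₂ : ℝ) (γ₁ γ₂ : ℝ → ℝ)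
    (hode1 : ∀ t : ℝ, HasDerivAt γ₁ (f₂ * γ₁ t ^ 2) t)
    (hode2 : ∀ t : ℝ, HasDerivAt γ₂ (s (γ₂ t) * γ₁ t) t) :
    ∀ k : ℕ, 1 ≤ k → ∃ H : ℝ → ℝ → ℝ,
      (∀ z : ℝ × ℝ, AnalyticAt ℝ (fun w : ℝ × ℝ => H w.1 w.2) z) ∧
      (∀ t : ℝ, iteratedDeriv k (deriv γ₂) t = H (γ₁ t) (γ₂ t) * γ₁ t ^ (k + 1)) := by
  have hds : ∀ z : ℝ, AnalyticAt ℝ (deriv s) z := by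
    intro z
    have h1 : AnalyticAt ℝ (fun w : ℝ => (fderiv ℝ s w) 1) z :=
      ((ContinuousLinearMap.apply ℝ ℝ (1 : ℝ)).analyticAt _).comp (hs z).fderiv
    have h2 : (fun w : ℝ => (fderiv ℝ s w) 1) = deriv s := funext fun w => fderiv_apply_one_eq_deriv
    rwa [h2] at h1
  intro k hk
  induction k, hk using Nat.le_induction with
  | base =>
    refine ⟨fun _ m => deriv s m * s m + f₂ * s m, ?_, ?_⟩
    · intro z
      exact (((hds z.2).comp analyticAt_snd).mul ((hs z.2).comp analyticAt_snd)).add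
        (analyticAt_const.mul ((hs z.2).comp analyticAt_snd))
    · intro t
      have hd2 : deriv γ₂ = fun t => s (γ₂ t) * γ₁ t := funext fun u => (hode2 u).deriv
      rw [iteratedDeriv_one, hd2]
      have hs1 := ((hs (γ₂ t)).differentiableAt.hasDerivAt).scomp t (hode2 t)
      simp only [Function.comp_def, smul_eq_mul] at hs1
      have hm := hs1.fun_mul (hode1 t)
      rw [hm.deriv]
      ring
  | succ k hk IH =>
    obtain ⟨H, hHa, hHt⟩ := IH
    set G : ℝ × ℝ → ℝ := fun w => H w.1 w.2 with hGdef
    refine ⟨fun l m => f₂ * l * (fderiv ℝ G (l, m)) (1, 0) +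
        s m * (fderiv ℝ G (l, m)) (0, 1) + ((k : ℝ) + 1) * f₂ * G (l, m), ?_, ?_⟩
    · intro z
      have hD1 : AnalyticAt ℝ (fun w : ℝ × ℝ => (fderiv ℝ G w) (1, 0)) z :=
        ((ContinuousLinearMap.apply ℝ ℝ ((1 : ℝ), (0 : ℝ))).analyticAt _).comp (hHa z).fderiv
      have hD2 : AnalyticAt ℝ (fun w : ℝ × ℝ => (fderiv ℝ G w) (0, 1)) z :=
        ((ContinuousLinearMap.apply ℝ ℝ ((0 : ℝ), (1 : ℝ))).analyticAt _).comp (hHa z).fderiv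
      exact (((analyticAt_const.mul analyticAt_fst).mul hD1).add
        ((((hs z.2).comp analyticAt_snd)).mul hD2)).add
        (analyticAt_const.mul (hHa z))
    · intro t
      rw [iteratedDeriv_succ]
      have hfun : iteratedDeriv k (deriv γ₂) = fun u => G (γ₁ u, γ₂ u) * γ₁ u ^ (k + 1) :=
        funext fun u => hHt u
      rw [hfun]
      have hp : HasDerivAt (fun u => (γ₁ u, γ₂ u))
          ((f₂ * γ₁ t ^ 2, s (γ₂ t) * γ₁ t) : ℝ × ℝ) t := (hode1 t).prodMk (hode2 t)
      have hGc : HasDerivAt (fun u => G (γ₁ u, γ₂ u))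
          ((fderiv ℝ G (γ₁ t, γ₂ t)) (f₂ * γ₁ t ^ 2, s (γ₂ t) * γ₁ t)) t :=
        ((hHa _).differentiableAt.hasFDerivAt).comp_hasDerivAt t hp
      have hpow : HasDerivAt (fun u => γ₁ u ^ (k + 1))
          ((((k : ℝ)) + 1) * γ₁ t ^ k * (f₂ * γ₁ t ^ 2)) t := by
        have := (hode1 t).fun_pow (k + 1)
        simpa using this
      have htot := hGc.fun_mul hpow
      rw [htot.deriv]
      have hlin : (fderiv ℝ G (γ₁ t, γ₂ t)) (f₂ * γ₁ t ^ 2, s (γ₂ t) * γ₁ t) =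
          (f₂ * γ₁ t ^ 2) * (fderiv ℝ G (γ₁ t, γ₂ t)) (1, 0) +
          (s (γ₂ t) * γ₁ t) * (fderiv ℝ G (γ₁ t, γ₂ t)) (0, 1) := by
        have h3 : ((f₂ * γ₁ t ^ 2, s (γ₂ t) * γ₁ t) : ℝ × ℝ) =
            (f₂ * γ₁ t ^ 2) • ((1 : ℝ), (0 : ℝ)) + (s (γ₂ t) * γ₁ t) • ((0 : ℝ), (1 : ℝ)) := by
          simp [Prod.ext_iff]
        rw [h3, map_add, map_smul, map_smul, smul_eq_mul, smul_eq_mul]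
      rw [hlin]
      ring

/-- for the flow `(γ₁, γ₂)` of the vector field
`X = f₂x²∂_x + s(y)x∂_y` with `s` real-analytic and initial condition `(x,y)`,
one has `γ₁(t) = x/(1 - f₂xt)`, and for every `k ≥ 1` there is a real-analytic
function `H_k(λ,μ)` with `(d^k/dt^k) γ₂'(t) = H_k(γ₁(t), γ₂(t))·γ₁(t)^{k+1}`;
in particular `γ₂^{(k+1)}(0) = H_k(x,y) x^{k+1} = O(x^{k+1})`. -/
theorem statement16 (s : ℝ → ℝ) (hs : ∀ z : ℝ, AnalyticAt ℝ s z)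
    (f₂ x y : ℝ) (γ₁ γ₂ : ℝ → ℝ)
    (h10 : γ₁ 0 = x) (h20 : γ₂ 0 = y)
    (hode1 : ∀ t : ℝ, HasDerivAt γ₁ (f₂ * γ₁ t ^ 2) t)
    (hode2 : ∀ t : ℝ, HasDerivAt γ₂ (s (γ₂ t) * γ₁ t) t) :
    (∀ t : ℝ, γ₁ t = x / (1 - f₂ * x * t)) ∧
    (∀ k : ℕ, 1 ≤ k → ∃ H : ℝ → ℝ → ℝ,
      (∀ z : ℝ × ℝ, AnalyticAt ℝ (fun w : ℝ × ℝ => H w.1 w.2) z) ∧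
      (∀ t : ℝ, iteratedDeriv k (deriv γ₂) t = H (γ₁ t) (γ₂ t) * γ₁ t ^ (k + 1)) ∧
      iteratedDeriv (k + 1) γ₂ 0 = H x y * x ^ (k + 1)) := by
  refine ⟨part1_statement16 f₂ x γ₁ h10 hode1, ?_⟩
  intro k hk
  obtain ⟨H, hHa, hHt⟩ := part2_statement16 s hs f₂ γ₁ γ₂ hode1 hode2 k hk
  refine ⟨H, hHa, hHt, ?_⟩
  rw [iteratedDeriv_succ']
  have := hHt 0
  rwa [h10, h20] at this
end
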